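/- Let Y ∈ ℝ^{N×T}, let Ω ⊆ {1,…,N}×{1,…,T}, let λ*, λ1 > 0, and suppose (X̂, Ô) is a global minimizer of the PCP objective f(X,O) = (1/2)‖P_Ω(Y−X−O)‖_F² + λ*‖X‖_* + λ1‖O‖₁ with rank(X̂) ≤ ρ. Then the infimum over P ∈ ℝ^{N×ρ}, Q ∈ ℝ^{T×ρ}, and O ∈ ℝ^{N×T} of the separable objective F(P,Q,O) = (1/2)‖P_Ω(Y − P Qᵀ − O)‖_F² + (λ*/2)(‖P‖_F² + ‖Q‖_F²) + λ1‖O‖₁ equals f(X̂, Ô), and it is attained at some (P̄, Q̄, Ō) with P̄ Q̄ᵀ = X̂ and Ō = Ô. -/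

import Mathlib

open Matrix

lemma transpose_mul_self_isHermitian {N T : ℕ} (X : Matrix (Fin N) (Fin T) ℝ) :
    (Xᵀ * X).IsHermitian := by
  have := Matrix.isHermitian_conjTranspose_mul_self X
  simpa [Matrix.conjTranspose_eq_transpose_of_trivial] using this

/-- Nuclear norm: sum of singular values (square roots of eigenvalues of `XᵀX`). -/
noncomputable def nuclearNorm {N T : ℕ} (X : Matrix (Fin N) (Fin T) ℝ) : ℝ :=
  ∑ i, Real.sqrt ((transpose_mul_self_isHermitian X).eigenvalues i)

/-- Frobenius norm `‖X‖_F = √(trace (XᵀX))`. -/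
noncomputable def frobeniusNorm {N T : ℕ} (X : Matrix (Fin N) (Fin T) ℝ) : ℝ :=
  Real.sqrt (Matrix.trace (Xᵀ * X))

/-- Entrywise ℓ1-norm `‖X‖₁ = ∑_{n,t} |x_{nt}|`. -/
noncomputable def l1Norm {N T : ℕ} (X : Matrix (Fin N) (Fin T) ℝ) : ℝ :=
  ∑ n, ∑ t, |X n t|

/-- Sampling operator `P_Ω`: keeps entries indexed by `Ω` and zeroes out the rest. -/
def sampling {N T : ℕ} (Ω : Finset (Fin N × Fin T)) (X : Matrix (Fin N) (Fin T) ℝ) :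
    Matrix (Fin N) (Fin T) ℝ :=
  fun n t => if (n, t) ∈ Ω then X n t else 0

/-- The PCP objective `f(X,O) = (1/2)‖P_Ω(Y−X−O)‖_F² + λ*‖X‖_* + λ1‖O‖₁`. -/
noncomputable def pcpObjective {N T : ℕ} (Ω : Finset (Fin N × Fin T))
    (Y : Matrix (Fin N) (Fin T) ℝ) (lamStar lam1 : ℝ)
    (X O : Matrix (Fin N) (Fin T) ℝ) : ℝ :=
  (1 / 2) * frobeniusNorm (sampling Ω (Y - X - O)) ^ 2 +
    lamStar * nuclearNorm X + lam1 * l1Norm O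

/-- The separable objective
`F(P,Q,O) = (1/2)‖P_Ω(Y − P Qᵀ − O)‖_F² + (λ*/2)(‖P‖_F² + ‖Q‖_F²) + λ1‖O‖₁`. -/
noncomputable def separableObjective {N T ρ : ℕ} (Ω : Finset (Fin N × Fin T))
    (Y : Matrix (Fin N) (Fin T) ℝ) (lamStar lam1 : ℝ)
    (P : Matrix (Fin N) (Fin ρ) ℝ) (Q : Matrix (Fin T) (Fin ρ) ℝ)
    (O : Matrix (Fin N) (Fin T) ℝ) : ℝ :=
  (1 / 2) * frobeniusNorm (sampling Ω (Y - P * Qᵀ - O)) ^ 2 +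
    (lamStar / 2) * (frobeniusNorm P ^ 2 + frobeniusNorm Q ^ 2) + lam1 * l1Norm O

-- basic helpers
lemma pcp_trace_tmul_nonneg {m n : ℕ} (M : Matrix (Fin m) (Fin n) ℝ) :
    0 ≤ Matrix.trace (Mᵀ * M) := by
  rw [Matrix.trace]
  refine Finset.sum_nonneg fun i _ => ?_
  rw [Matrix.diag_apply, Matrix.mul_apply]
  exact Finset.sum_nonneg fun k _ => mul_self_nonneg _

lemma pcp_frob_sq {m n : ℕ} (M : Matrix (Fin m) (Fin n) ℝ) :
    frobeniusNorm M ^ 2 = Matrix.trace (Mᵀ * M) :=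
  Real.sq_sqrt (pcp_trace_tmul_nonneg M)

lemma pcp_trace_inner_le {m n : ℕ} (C D : Matrix (Fin m) (Fin n) ℝ) :
    Matrix.trace (Cᵀ * D) ≤ (Matrix.trace (Cᵀ * C) + Matrix.trace (Dᵀ * D)) / 2 := by
  have h0 := pcp_trace_tmul_nonneg (C - D)
  have hsym : Matrix.trace (Dᵀ * C) = Matrix.trace (Cᵀ * D) := by
    rw [← Matrix.trace_transpose (Dᵀ * C), Matrix.transpose_mul, Matrix.transpose_transpose]
  rw [Matrix.transpose_sub, Matrix.sub_mul, Matrix.mul_sub, Matrix.mul_sub,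
    Matrix.trace_sub, Matrix.trace_sub, Matrix.trace_sub, hsym] at h0
  linarith

-- eigen data
noncomputable def pcpD {N T : ℕ} (X : Matrix (Fin N) (Fin T) ℝ) : Fin T → ℝ :=
  (transpose_mul_self_isHermitian X).eigenvalues

noncomputable def pcpSig {N T : ℕ} (X : Matrix (Fin N) (Fin T) ℝ) : Fin T → ℝ :=
  fun i => Real.sqrt (pcpD X i)

noncomputable def pcpU {N T : ℕ} (X : Matrix (Fin N) (Fin T) ℝ) : Matrix (Fin T) (Fin T) ℝ :=
  ((transpose_mul_self_isHermitian X).eigenvectorUnitary : Matrix (Fin T) (Fin T) ℝ)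

noncomputable def pcpB {N T : ℕ} (X : Matrix (Fin N) (Fin T) ℝ) : Matrix (Fin N) (Fin T) ℝ :=
  X * pcpU X

lemma pcpD_nonneg {N T : ℕ} (X : Matrix (Fin N) (Fin T) ℝ) (i : Fin T) : 0 ≤ pcpD X i := by
  have hps : (Xᵀ * X).PosSemidef := by
    have := Matrix.posSemidef_conjTranspose_mul_self X
    rwa [Matrix.conjTranspose_eq_transpose_of_trivial] at this
  exact hps.eigenvalues_nonneg i

lemma pcpSig_sq {N T : ℕ} (X : Matrix (Fin N) (Fin T) ℝ) (i : Fin T) :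
    pcpSig X i ^ 2 = pcpD X i := Real.sq_sqrt (pcpD_nonneg X i)

lemma pcpSig_eq_zero_iff {N T : ℕ} (X : Matrix (Fin N) (Fin T) ℝ) (i : Fin T) :
    pcpSig X i = 0 ↔ pcpD X i = 0 := by
  constructor
  · intro h
    rw [← pcpSig_sq X i, h]; ring
  · intro h; rw [pcpSig, h, Real.sqrt_zero]

lemma pcpUtU {N T : ℕ} (X : Matrix (Fin N) (Fin T) ℝ) : (pcpU X)ᵀ * pcpU X = 1 := by
  have := Matrix.mem_unitaryGroup_iff'.mp ((transpose_mul_self_isHermitian X).eigenvectorUnitary).2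
  rwa [Matrix.star_eq_conjTranspose, Matrix.conjTranspose_eq_transpose_of_trivial] at this

lemma pcpUUt {N T : ℕ} (X : Matrix (Fin N) (Fin T) ℝ) : pcpU X * (pcpU X)ᵀ = 1 := by
  have := Matrix.mem_unitaryGroup_iff.mp ((transpose_mul_self_isHermitian X).eigenvectorUnitary).2
  rwa [Matrix.star_eq_conjTranspose, Matrix.conjTranspose_eq_transpose_of_trivial] at this

lemma pcpBtB {N T : ℕ} (X : Matrix (Fin N) (Fin T) ℝ) :
    (pcpB X)ᵀ * pcpB X = Matrix.diagonal (pcpD X) := by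
  have h := transpose_mul_self_isHermitian X
  have hs := h.conjStarAlgAut_star_eigenvectorUnitary
  rw [Unitary.conjStarAlgAut_star_apply] at hs
  rw [Matrix.star_eq_conjTranspose, Matrix.conjTranspose_eq_transpose_of_trivial] at hs
  have hof : (RCLike.ofReal ∘ h.eigenvalues : Fin T → ℝ) = h.eigenvalues := by
    funext i; simp [RCLike.ofReal_real_eq_id]
  rw [hof] at hs
  calc (pcpB X)ᵀ * pcpB X = (pcpU X)ᵀ * (Xᵀ * X) * pcpU X := by
        rw [pcpB, Matrix.transpose_mul]; simp only [Matrix.mul_assoc]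
    _ = Matrix.diagonal (pcpD X) := hs

lemma pcpB_col_zero {N T : ℕ} (X : Matrix (Fin N) (Fin T) ℝ) {i : Fin T}
    (hi : pcpD X i = 0) (n : Fin N) : pcpB X n i = 0 := by
  have h := congrFun (congrFun (pcpBtB X) i) i
  simp only [Matrix.mul_apply, Matrix.transpose_apply, Matrix.diagonal_apply_eq, hi] at h
  exact mul_self_eq_zero.mp
    ((Finset.sum_eq_zero_iff_of_nonneg (fun k _ => mul_self_nonneg _)).mp h n (Finset.mem_univ n))

lemma pcp_absorb {N T : ℕ} (X : Matrix (Fin N) (Fin T) ℝ) (g : Fin T → ℝ)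
    (hg : ∀ i, pcpD X i ≠ 0 → g i = 1) : pcpB X * Matrix.diagonal g = pcpB X := by
  ext n i
  rw [Matrix.mul_diagonal]
  by_cases hi : pcpD X i = 0
  · rw [pcpB_col_zero X hi, zero_mul]
  · rw [hg i hi, mul_one]

lemma pcp_nuclearNorm_eq {N T : ℕ} (X : Matrix (Fin N) (Fin T) ℝ) :
    nuclearNorm X = ∑ i, pcpSig X i := rfl


lemma pcp_sig_mul_self {N T : ℕ} (X : Matrix (Fin N) (Fin T) ℝ) (i : Fin T) :
    pcpSig X i * pcpSig X i = pcpD X i := by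
  rw [← pow_two]; exact pcpSig_sq X i

lemma pcp_nuclear_le {N T ρ : ℕ} (P : Matrix (Fin N) (Fin ρ) ℝ) (Q : Matrix (Fin T) (Fin ρ) ℝ) :
    nuclearNorm (P * Qᵀ) ≤ (frobeniusNorm P ^ 2 + frobeniusNorm Q ^ 2) / 2 := by
  set X : Matrix (Fin N) (Fin T) ℝ := P * Qᵀ with hX
  set V : Matrix (Fin N) (Fin T) ℝ := pcpB X * Matrix.diagonal (fun i => (pcpSig X i)⁻¹) with hV
  -- V^T (X U) = diagonal sigma
  have hdiag : Vᵀ * (X * pcpU X) = Matrix.diagonal (pcpSig X) := by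
    have e1 : Vᵀ * (X * pcpU X) =
        Matrix.diagonal (fun i => (pcpSig X i)⁻¹) * ((pcpB X)ᵀ * pcpB X) := by
      rw [hV, Matrix.transpose_mul, Matrix.diagonal_transpose, pcpB]
      simp only [Matrix.mul_assoc]
    rw [e1, pcpBtB, Matrix.diagonal_mul_diagonal]
    refine congrArg Matrix.diagonal (funext fun i => ?_)
    by_cases hi : pcpD X i = 0
    · have hs : pcpSig X i = 0 := (pcpSig_eq_zero_iff X i).mpr hi
      simp [hi, hs]
    · have hs : pcpSig X i ≠ 0 := fun h => hi ((pcpSig_eq_zero_iff X i).mp h)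
      rw [← pcp_sig_mul_self X i]
      field_simp
  have key : nuclearNorm X = Matrix.trace ((Pᵀ * V)ᵀ * (Qᵀ * pcpU X)) := by
    have e0 : (Pᵀ * V)ᵀ * (Qᵀ * pcpU X) = Vᵀ * (X * pcpU X) := by
      rw [Matrix.transpose_mul, Matrix.transpose_transpose, hX]
      simp only [Matrix.mul_assoc]
    rw [pcp_nuclearNorm_eq, ← Matrix.trace_diagonal, ← hdiag, e0]
  have hVtV : Vᵀ * V = Matrix.diagonal (fun i => if pcpD X i = 0 then (0:ℝ) else 1) := by
    have e1 : Vᵀ * V = Matrix.diagonal (fun i => (pcpSig X i)⁻¹) *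
        (((pcpB X)ᵀ * pcpB X) * Matrix.diagonal (fun i => (pcpSig X i)⁻¹)) := by
      rw [hV, Matrix.transpose_mul, Matrix.diagonal_transpose]
      simp only [Matrix.mul_assoc]
    rw [e1, pcpBtB, Matrix.diagonal_mul_diagonal, Matrix.diagonal_mul_diagonal]
    refine congrArg Matrix.diagonal (funext fun i => ?_)
    by_cases hi : pcpD X i = 0
    · have hs : pcpSig X i = 0 := (pcpSig_eq_zero_iff X i).mpr hi
      simp [hi, hs]
    · have hs : pcpSig X i ≠ 0 := fun h => hi ((pcpSig_eq_zero_iff X i).mp h)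
      rw [if_neg hi, ← pcp_sig_mul_self X i]
      field_simp
  have hVind : V * Matrix.diagonal (fun i => if pcpD X i = 0 then (0:ℝ) else 1) = V := by
    ext n i
    rw [Matrix.mul_diagonal]
    by_cases hi : pcpD X i = 0
    · rw [hV, Matrix.mul_diagonal, pcpB_col_zero X hi, zero_mul]
      simp
    · rw [if_neg hi, mul_one]
  have hWW : (V * Vᵀ) * (V * Vᵀ) = V * Vᵀ := by
    have e1 : (V * Vᵀ) * (V * Vᵀ) = V * ((Vᵀ * V) * Vᵀ) := by
      simp only [Matrix.mul_assoc]
    rw [e1, hVtV, ← Matrix.mul_assoc, hVind]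
  -- bound the P-term
  have hPbound : Matrix.trace ((Pᵀ * V)ᵀ * (Pᵀ * V)) ≤ frobeniusNorm P ^ 2 := by
    rw [pcp_frob_sq]
    have e1 : (Pᵀ * V)ᵀ * (Pᵀ * V) = Vᵀ * (P * (Pᵀ * V)) := by
      rw [Matrix.transpose_mul, Matrix.transpose_transpose]
      simp only [Matrix.mul_assoc]
    rw [e1, Matrix.trace_mul_comm]
    have e2' : (P * (Pᵀ * V)) * Vᵀ = P * (Pᵀ * (V * Vᵀ)) := by
      simp only [Matrix.mul_assoc]
    rw [e2', Matrix.trace_mul_comm]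
    -- goal: trace ((Pᵀ * (V*Vᵀ)) * P) ≤ trace (Pᵀ * P)
    have hKsym : (1 - V * Vᵀ)ᵀ = 1 - V * Vᵀ := by
      rw [Matrix.transpose_sub, Matrix.transpose_one, Matrix.transpose_mul,
        Matrix.transpose_transpose]
    have hKidem : (1 - V * Vᵀ) * (1 - V * Vᵀ) = 1 - V * Vᵀ := by
      rw [Matrix.mul_sub, Matrix.sub_mul, Matrix.sub_mul, hWW]
      simp only [Matrix.one_mul, Matrix.mul_one]
      abel
    have hpos : 0 ≤ Matrix.trace (((1 - V * Vᵀ) * P)ᵀ * ((1 - V * Vᵀ) * P)) :=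
      pcp_trace_tmul_nonneg _
    have e3 : ((1 - V * Vᵀ) * P)ᵀ * ((1 - V * Vᵀ) * P) = Pᵀ * P - Pᵀ * (V * Vᵀ) * P := by
      rw [Matrix.transpose_mul, hKsym, Matrix.mul_assoc, ← Matrix.mul_assoc (1 - V * Vᵀ),
        hKidem]
      rw [Matrix.sub_mul, Matrix.one_mul, Matrix.mul_sub]
      simp only [Matrix.mul_assoc]
    rw [e3, Matrix.trace_sub] at hpos
    linarith
  have hQeq : Matrix.trace ((Qᵀ * pcpU X)ᵀ * (Qᵀ * pcpU X)) = frobeniusNorm Q ^ 2 := by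
    rw [pcp_frob_sq]
    have e1 : (Qᵀ * pcpU X)ᵀ * (Qᵀ * pcpU X) = (pcpU X)ᵀ * (Q * (Qᵀ * pcpU X)) := by
      rw [Matrix.transpose_mul, Matrix.transpose_transpose]
      simp only [Matrix.mul_assoc]
    rw [e1, Matrix.trace_mul_comm]
    have e2 : (Q * (Qᵀ * pcpU X)) * (pcpU X)ᵀ = Q * (Qᵀ * (pcpU X * (pcpU X)ᵀ)) := by
      simp only [Matrix.mul_assoc]
    rw [e2, pcpUUt, Matrix.mul_one, Matrix.trace_mul_comm]
  have hineq := pcp_trace_inner_le (Pᵀ * V) (Qᵀ * pcpU X)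
  rw [key]
  rw [hQeq] at hineq
  linarith


lemma pcp_exists_PQ {N T ρ : ℕ} (X : Matrix (Fin N) (Fin T) ℝ) (hrank : X.rank ≤ ρ) :
    ∃ (P : Matrix (Fin N) (Fin ρ) ℝ) (Q : Matrix (Fin T) (Fin ρ) ℝ),
      P * Qᵀ = X ∧ frobeniusNorm P ^ 2 = nuclearNorm X ∧ frobeniusNorm Q ^ 2 = nuclearNorm X := by
  classical
  have hcard : Fintype.card {i // pcpD X i ≠ 0} ≤ Fintype.card (Fin ρ) := by
    rw [Fintype.card_fin]
    have h1 : (Xᵀ * X).rank = Fintype.card {i // pcpD X i ≠ 0} :=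
      (transpose_mul_self_isHermitian X).rank_eq_card_non_zero_eigs
    rw [Matrix.rank_transpose_mul_self] at h1
    rw [← h1]; exact hrank
  obtain ⟨e⟩ := Function.Embedding.nonempty_of_card_le hcard
  set M : Matrix (Fin ρ) (Fin T) ℝ :=
    Matrix.of (fun j i => if h : pcpD X i ≠ 0 then (if j = e ⟨i, h⟩ then (1:ℝ) else 0) else 0)
    with hM
  have hMtM : Mᵀ * M = Matrix.diagonal (fun i => if pcpD X i = 0 then (0:ℝ) else 1) := by
    ext i i'
    rw [Matrix.mul_apply, Matrix.diagonal_apply]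
    simp only [Matrix.transpose_apply]
    by_cases hi : pcpD X i = 0
    · rw [Finset.sum_eq_zero (fun j _ => by simp [hM, hi])]
      by_cases hii : i = i'
      · subst hii; simp [hi]
      · rw [if_neg hii]
    · by_cases hi' : pcpD X i' = 0
      · rw [Finset.sum_eq_zero (fun j _ => by simp [hM, hi'])]
        rw [if_neg (fun h : i = i' => hi (by rw [h]; exact hi'))]
      · have hterm : ∀ j : Fin ρ, M j i * M j i' =
            if j = e ⟨i, hi⟩ then (if j = e ⟨i', hi'⟩ then (1:ℝ) else 0) else 0 := by
          intro j
          rw [hM]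
          simp only [Matrix.of_apply, dif_pos hi, dif_pos hi']
          by_cases h : j = e ⟨i, hi⟩ <;> simp [h]
        rw [Finset.sum_congr rfl (fun j _ => hterm j), Finset.sum_ite_eq' Finset.univ]
        simp only [Finset.mem_univ, if_true]
        by_cases hii : i = i'
        · subst hii
          simp [hi]
        · rw [if_neg (fun h => hii (congrArg Subtype.val (e.injective h))), if_neg hii]
  -- the uncompressed factors
  set f1 : Fin T → ℝ := fun i => Real.sqrt (pcpSig X i) * (pcpSig X i)⁻¹ with hf1
  set f2 : Fin T → ℝ := fun i => Real.sqrt (pcpSig X i) with hf2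
  set P0 : Matrix (Fin N) (Fin T) ℝ := pcpB X * Matrix.diagonal f1 with hP0
  set Q0 : Matrix (Fin T) (Fin T) ℝ := pcpU X * Matrix.diagonal f2 with hQ0
  have hf1_zero : ∀ i, pcpD X i = 0 → f1 i = 0 := by
    intro i hi
    have hs : pcpSig X i = 0 := (pcpSig_eq_zero_iff X i).mpr hi
    simp [hf1, hs]
  have hP0Q0 : P0 * Q0ᵀ = X := by
    have key1 : P0 * Q0ᵀ = pcpB X * (Matrix.diagonal f1 * Matrix.diagonal f2) * (pcpU X)ᵀ := by
      rw [hQ0, Matrix.transpose_mul, Matrix.diagonal_transpose, hP0]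
      simp only [Matrix.mul_assoc]
    have hg : ∀ i, pcpD X i ≠ 0 → f1 i * f2 i = 1 := by
      intro i hi
      have hs : pcpSig X i ≠ 0 := fun h => hi ((pcpSig_eq_zero_iff X i).mp h)
      have hsq : Real.sqrt (pcpSig X i) * Real.sqrt (pcpSig X i) = pcpSig X i :=
        Real.mul_self_sqrt (Real.sqrt_nonneg _)
      rw [hf1, hf2]
      field_simp
      linarith [hsq]
    rw [key1, Matrix.diagonal_mul_diagonal, pcp_absorb X (fun i => f1 i * f2 i) hg, pcpB, Matrix.mul_assoc,
      pcpUUt, Matrix.mul_one]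
  have hP0ind : P0 * Matrix.diagonal (fun i => if pcpD X i = 0 then (0:ℝ) else 1) = P0 := by
    ext n i
    rw [Matrix.mul_diagonal]
    by_cases hi : pcpD X i = 0
    · rw [hP0, Matrix.mul_diagonal, hf1_zero i hi, mul_zero, zero_mul]
    · rw [if_neg hi, mul_one]
  -- factorization
  refine ⟨P0 * Mᵀ, Q0 * Mᵀ, ?_, ?_, ?_⟩
  · rw [Matrix.transpose_mul, Matrix.transpose_transpose]
    have e1 : (P0 * Mᵀ) * (M * Q0ᵀ) = P0 * ((Mᵀ * M) * Q0ᵀ) := by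
      simp only [Matrix.mul_assoc]
    rw [e1, hMtM, ← Matrix.mul_assoc, hP0ind, hP0Q0]
  · -- frobenius of P0 * Mᵀ
    rw [pcp_frob_sq, pcp_nuclearNorm_eq]
    have e1 : (P0 * Mᵀ)ᵀ * (P0 * Mᵀ) = M * ((P0ᵀ * P0) * Mᵀ) := by
      rw [Matrix.transpose_mul, Matrix.transpose_transpose]
      simp only [Matrix.mul_assoc]
    rw [e1, Matrix.trace_mul_comm]
    have e2 : ((P0ᵀ * P0) * Mᵀ) * M = (P0ᵀ * P0) * (Mᵀ * M) := by
      simp only [Matrix.mul_assoc]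
    have hP0tP0 : P0ᵀ * P0 =
        Matrix.diagonal f1 * Matrix.diagonal (pcpD X) * Matrix.diagonal f1 := by
      have e3 : P0ᵀ * P0 =
          Matrix.diagonal f1 * (((pcpB X)ᵀ * pcpB X) * Matrix.diagonal f1) := by
        rw [hP0, Matrix.transpose_mul, Matrix.diagonal_transpose]
        simp only [Matrix.mul_assoc]
      rw [e3, pcpBtB, ← Matrix.mul_assoc]
    rw [e2, hP0tP0, hMtM]
    simp only [Matrix.diagonal_mul_diagonal, Matrix.trace_diagonal]
    refine Finset.sum_congr rfl (fun i _ => ?_)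
    by_cases hi : pcpD X i = 0
    · have hs : pcpSig X i = 0 := (pcpSig_eq_zero_iff X i).mpr hi
      simp [hi, hs]
    · have hs : pcpSig X i ≠ 0 := fun h => hi ((pcpSig_eq_zero_iff X i).mp h)
      have hsq : Real.sqrt (pcpSig X i) * Real.sqrt (pcpSig X i) = pcpSig X i :=
        Real.mul_self_sqrt (Real.sqrt_nonneg _)
      rw [if_neg hi, mul_one, hf1, ← pcp_sig_mul_self X i]
      field_simp
      nlinarith [hsq]
  · -- frobenius of Q0 * Mᵀ
    rw [pcp_frob_sq, pcp_nuclearNorm_eq]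
    have e1 : (Q0 * Mᵀ)ᵀ * (Q0 * Mᵀ) = M * ((Q0ᵀ * Q0) * Mᵀ) := by
      rw [Matrix.transpose_mul, Matrix.transpose_transpose]
      simp only [Matrix.mul_assoc]
    rw [e1, Matrix.trace_mul_comm]
    have e2 : ((Q0ᵀ * Q0) * Mᵀ) * M = (Q0ᵀ * Q0) * (Mᵀ * M) := by
      simp only [Matrix.mul_assoc]
    have hQ0tQ0 : Q0ᵀ * Q0 = Matrix.diagonal f2 * Matrix.diagonal f2 := by
      have e3 : Q0ᵀ * Q0 =
          Matrix.diagonal f2 * (((pcpU X)ᵀ * pcpU X) * Matrix.diagonal f2) := by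
        rw [hQ0, Matrix.transpose_mul, Matrix.diagonal_transpose]
        simp only [Matrix.mul_assoc]
      rw [e3, pcpUtU, Matrix.one_mul]
    rw [e2, hQ0tQ0, hMtM]
    simp only [Matrix.diagonal_mul_diagonal, Matrix.trace_diagonal]
    refine Finset.sum_congr rfl (fun i _ => ?_)
    by_cases hi : pcpD X i = 0
    · have hs : pcpSig X i = 0 := (pcpSig_eq_zero_iff X i).mpr hi
      simp [hi, hs]
    · have hsq : Real.sqrt (pcpSig X i) * Real.sqrt (pcpSig X i) = pcpSig X i :=
        Real.mul_self_sqrt (Real.sqrt_nonneg _)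
      rw [if_neg hi, mul_one, hf2]
      linarith [hsq]


/-- if `(X̂, Ô)` globally minimizes the PCP objective and `rank X̂ ≤ ρ`, then the
infimum of the separable objective over `P, Q, O` equals `f(X̂, Ô)` and is attained at some
`(P̄, Q̄, Ō)` with `P̄ Q̄ᵀ = X̂` and `Ō = Ô`. -/
theorem separable_infimum_eq_pcp_min {N T ρ : ℕ} (Ω : Finset (Fin N × Fin T))
    (Y : Matrix (Fin N) (Fin T) ℝ) (lamStar lam1 : ℝ)
    (hlamStar : 0 < lamStar) (hlam1 : 0 < lam1)
    (Xhat Ohat : Matrix (Fin N) (Fin T) ℝ)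
    (hmin : ∀ X O : Matrix (Fin N) (Fin T) ℝ,
      pcpObjective Ω Y lamStar lam1 Xhat Ohat ≤ pcpObjective Ω Y lamStar lam1 X O)
    (hrank : Xhat.rank ≤ ρ) :
    (∀ (P : Matrix (Fin N) (Fin ρ) ℝ) (Q : Matrix (Fin T) (Fin ρ) ℝ)
        (O : Matrix (Fin N) (Fin T) ℝ),
      pcpObjective Ω Y lamStar lam1 Xhat Ohat ≤ separableObjective Ω Y lamStar lam1 P Q O) ∧
    (∃ (P : Matrix (Fin N) (Fin ρ) ℝ) (Q : Matrix (Fin T) (Fin ρ) ℝ)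
        (O : Matrix (Fin N) (Fin T) ℝ),
      P * Qᵀ = Xhat ∧ O = Ohat ∧
      separableObjective Ω Y lamStar lam1 P Q O = pcpObjective Ω Y lamStar lam1 Xhat Ohat) := by
  
  constructor
  · intro P Q O
    refine (hmin (P * Qᵀ) O).trans ?_
    unfold pcpObjective separableObjective
    have key := pcp_nuclear_le P Q
    have h2 := mul_le_mul_of_nonneg_left key hlamStar.le
    linarith
  · obtain ⟨P, Q, hPQ, hP, hQ⟩ := pcp_exists_PQ Xhat hrank
    refine ⟨P, Q, Ohat, hPQ, rfl, ?_⟩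
    unfold pcpObjective separableObjective
    rw [hPQ, hP, hQ]
    ring
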